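/- arXiv:2408.04618 — 3 statements merged into one kernel-verified Lean document; each statement's English description precedes it below -/
import Mathlib

section
/- In every 2-connected finite simple graph G, any two longest cycles share a vertex: if C1 and C2 are cycles of maximum length in G, then V(C1) ∩ V(C2) ≠ ∅. -/
open SimpleGraph Walk

section Helpers

variable {V : Type*} {G : SimpleGraph V}

lemma append_isPath {a b c : V} {p : G.Walk a b} {q : G.Walk b c}
    (hp : p.IsPath) (hq : q.IsPath)
    (h : ∀ x, x ∈ p.support → x ∈ q.support → x = b) : (p.append q).IsPath := by
  rw [Walk.isPath_def, Walk.support_append, List.nodup_append]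
  refine ⟨hp.support_nodup, ?_, ?_⟩
  · have := hq.support_nodup
    rw [q.support_eq_cons] at this
    exact this.of_cons
  · rintro x hx _ hx' rfl
    have hxb : x = b := h x hx (List.mem_of_mem_tail hx')
    subst hxb
    have := hq.support_nodup
    rw [q.support_eq_cons] at this
    exact (List.nodup_cons.mp this).1 hx'

lemma start_edge {x y z : V} {q : G.Walk x y} (hq : q.IsPath) (he : s(x, z) ∈ q.edges) :
    ∃ (h : G.Adj x z) (q' : G.Walk z y), q = Walk.cons h q' := by
  cases q with
  | nil => simp at he
  | cons h q' =>
    rename_i w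
    rw [Walk.edges_cons, List.mem_cons] at he
    rcases he with he | he
    · rw [Sym2.eq_iff] at he
      rcases he with ⟨-, rfl⟩ | ⟨rfl, rfl⟩
      · exact ⟨h, q', rfl⟩
      · exact absurd rfl h.ne
    · exfalso
      have hx : x ∈ q'.support := q'.fst_mem_support_of_mem_edges he
      rw [Walk.cons_isPath_iff] at hq
      exact hq.2 hx

lemma exists_prefix_until (S : V → Prop) :
    ∀ {a b : V} (P : G.Walk a b), S b →
    ∃ (z : V) (P' : G.Walk a z), S z ∧ (∀ x ∈ P'.support, S x → x = z) ∧
      (∀ x ∈ P'.support, x ∈ P.support) ∧ (P.IsPath → P'.IsPath) := by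
  intro a b P
  induction P with
  | nil =>
    intro hb
    exact ⟨_, Walk.nil, hb, by simp, by simp, fun _ => by simp⟩
  | @cons a c b h p ih =>
    intro hb
    by_cases ha : S a
    · refine ⟨a, Walk.nil, ha, by simp, by simp, fun _ => by simp⟩
    · obtain ⟨z, P', hz, hfirst, hsub, hpath⟩ := ih hb
      refine ⟨z, Walk.cons h P', hz, ?_, ?_, ?_⟩
      · intro x hx hSx
        rw [Walk.support_cons, List.mem_cons] at hx
        rcases hx with rfl | hx
        · exact absurd hSx ha
        · exact hfirst x hx hSx
      · intro x hx
        rw [Walk.support_cons, List.mem_cons] at hx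
        rcases hx with rfl | hx
        · simp
        · exact List.mem_cons_of_mem _ (hsub x hx)
      · intro hP
        rw [Walk.cons_isPath_iff] at hP ⊢
        exact ⟨hpath hP.1, fun hmem => hP.2 (hsub a hmem)⟩

lemma induce_reachable {s : Set V} :
    ∀ {x y : V} (p : G.Walk x y) (hp : ∀ z ∈ p.support, z ∈ s),
      (G.induce s).Reachable ⟨x, hp x p.start_mem_support⟩ ⟨y, hp y p.end_mem_support⟩ := by
  intro x y p
  induction p with
  | nil => intro hp; rfl
  | @cons x c y h p ih =>
    intro hp
    have hp' : ∀ z ∈ p.support, z ∈ s := fun z hz => hp z (by simp [hz])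
    have hadj : (G.induce s).Adj ⟨x, hp x (by simp)⟩ ⟨c, hp' c p.start_mem_support⟩ := h
    exact (hadj.reachable).trans (ih hp')

lemma walk_of_induce_reachable {s : Set V} {x y : V} {hx : x ∈ s} {hy : y ∈ s}
    (hr : (G.induce s).Reachable ⟨x, hx⟩ ⟨y, hy⟩) :
    ∃ p : G.Walk x y, ∀ z ∈ p.support, z ∈ s := by
  obtain ⟨q⟩ := hr
  refine ⟨q.map (SimpleGraph.Embedding.induce s).toHom, ?_⟩
  intro z hz
  replace hz : z ∈ q.support.map (SimpleGraph.Embedding.induce (G := G) s).toHom := by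
    rw [← Walk.support_map]; exact hz
  rw [List.mem_map] at hz
  obtain ⟨⟨w, hw⟩, -, rfl⟩ := hz
  exact hw

lemma induce_connected_of_walks {s : Set V} (hne : s.Nonempty)
    (h : ∀ x ∈ s, ∀ y ∈ s, ∃ p : G.Walk x y, ∀ z ∈ p.support, z ∈ s) :
    (G.induce s).Connected := by
  have : Nonempty s := ⟨⟨hne.choose, hne.choose_spec⟩⟩
  refine ⟨fun a b => ?_⟩
  obtain ⟨x, hx⟩ := a
  obtain ⟨y, hy⟩ := b
  obtain ⟨p, hp⟩ := h x hx y hy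
  have := induce_reachable (G := G) (s := s) p hp
  convert this

end Helpers

section TwoConn

variable {W : Type*} [DecidableEq W] {H : SimpleGraph W}

lemma end_not_mem_takeUntil {u w v : W} {p : H.Walk u w} (hp : p.IsPath)
    (hv : v ∈ p.support) (hvw : v ≠ w) : w ∉ (p.takeUntil v hv).support := by
  intro hmem
  have hspec := p.take_spec hv
  have hnd : p.support.Nodup := hp.support_nodup
  rw [← hspec, Walk.support_append, List.nodup_append] at hnd
  have hw2 : w ∈ (p.dropUntil v hv).support.tail := by
    have hend := (p.dropUntil v hv).end_mem_support
    rw [(p.dropUntil v hv).support_eq_cons] at hend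
    rw [List.mem_cons] at hend
    rcases hend with h | h
    · exact absurd h.symm hvw
    · exact h
  exact hnd.2.2 _ hmem _ hw2 rfl

/-- The inductive-step construction when `v` lies on `P₁`. -/
lemma step_mem {u w v : W} {P₁ P₂ : H.Walk u w}
    (h₁ : P₁.IsPath) (h₂ : P₂.IsPath)
    (hsep : ∀ x, x ∈ P₁.support → x ∈ P₂.support → x = u ∨ x = w)
    (hv₁ : v ∈ P₁.support) (hvu : v ≠ u) (hvw : v ≠ w) (hwv : H.Adj w v) :
    ∃ p q : H.Walk u v, p.IsPath ∧ q.IsPath ∧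
      ∀ x, x ∈ p.support → x ∈ q.support → x = u ∨ x = v := by
  have hv₂ : v ∉ P₂.support := by
    intro hv2
    rcases hsep v hv₁ hv2 with h | h
    · exact hvu h
    · exact hvw h
  refine ⟨P₁.takeUntil v hv₁, P₂.append (Walk.cons hwv Walk.nil), h₁.takeUntil hv₁, ?_, ?_⟩
  · refine append_isPath h₂ (by simp [hwv.ne]) ?_
    intro x hx hx'
    simp only [Walk.support_cons, Walk.support_nil, List.mem_cons, List.not_mem_nil, or_false] at hx'
    rcases hx' with rfl | rfl
    · rfl
    · exact absurd hx hv₂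
  · intro x hx hx'
    have hx1 : x ∈ P₁.support := P₁.support_takeUntil_subset hv₁ hx
    rw [Walk.mem_support_append_iff] at hx'
    rcases hx' with hx' | hx'
    · rcases hsep x hx1 hx' with h | h
      · exact Or.inl h
      · subst h
        exact absurd hx (end_not_mem_takeUntil h₁ hv₁ hvw)
    · simp only [Walk.support_cons, Walk.support_nil, List.mem_cons, List.not_mem_nil, or_false] at hx'
      rcases hx' with rfl | rfl
      · exact absurd hx (end_not_mem_takeUntil h₁ hv₁ hvw)
      · exact Or.inr rfl

/-- The inductive-step construction when `v` lies on neither path. -/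
lemma step_notmem {u w v z : W} {P₁ P₂ : H.Walk u w}
    (h₁ : P₁.IsPath) (h₂ : P₂.IsPath)
    (hsep : ∀ x, x ∈ P₁.support → x ∈ P₂.support → x = u ∨ x = w)
    (hv₁ : v ∉ P₁.support) (hv₂ : v ∉ P₂.support)
    (hvu : v ≠ u) (hwv : H.Adj w v)
    {R : H.Walk v z} (hR : R.IsPath) (hz : z ∈ P₁.support)
    (hfirst : ∀ x ∈ R.support, (x ∈ P₁.support ∨ x ∈ P₂.support) → x = z)
    (hwR : w ∉ R.support) :
    ∃ p q : H.Walk u v, p.IsPath ∧ q.IsPath ∧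
      ∀ x, x ∈ p.support → x ∈ q.support → x = u ∨ x = v := by
  have hzw : z ≠ w := fun h => hwR (h ▸ R.end_mem_support)
  have hwtake : w ∉ (P₁.takeUntil z hz).support := end_not_mem_takeUntil h₁ hz hzw
  refine ⟨(P₁.takeUntil z hz).append R.reverse, P₂.append (Walk.cons hwv Walk.nil), ?_, ?_, ?_⟩
  · refine append_isPath (h₁.takeUntil hz) hR.reverse ?_
    intro x hx hx'
    rw [Walk.support_reverse, List.mem_reverse] at hx'
    exact hfirst x hx' (Or.inl (P₁.support_takeUntil_subset hz hx))
  · refine append_isPath h₂ (by simp [hwv.ne]) ?_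
    intro x hx hx'
    simp only [Walk.support_cons, Walk.support_nil, List.mem_cons, List.not_mem_nil, or_false] at hx'
    rcases hx' with rfl | rfl
    · rfl
    · exact absurd hx hv₂
  · intro x hx hx'
    rw [Walk.mem_support_append_iff] at hx hx'
    have hx'' : x ∈ P₂.support ∨ x = v := by
      rcases hx' with h | h
      · exact Or.inl h
      · simp only [Walk.support_cons, Walk.support_nil, List.mem_cons, List.not_mem_nil, or_false] at h
        rcases h with rfl | rfl
        · exact Or.inl P₂.end_mem_support
        · exact Or.inr rfl
    rcases hx with hx | hx
    · -- x on the takeUntil part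
      have hx1 : x ∈ P₁.support := P₁.support_takeUntil_subset hz hx
      rcases hx'' with h | rfl
      · rcases hsep x hx1 h with h' | h'
        · exact Or.inl h'
        · exact absurd (h' ▸ hx) hwtake
      · exact absurd hx1 hv₁
    · -- x on R.reverse
      rw [Walk.support_reverse, List.mem_reverse] at hx
      rcases hx'' with h | rfl
      · have hxz : x = z := hfirst x hx (Or.inr h)
        subst hxz
        rcases hsep x hz h with h' | h'
        · exact Or.inl h'
        · exact absurd h' hzw
      · exact Or.inr rfl

end TwoConn

theorem twoConn {W : Type*} [Fintype W] [DecidableEq W] (H : SimpleGraph W)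
    (hcard : 3 ≤ Fintype.card W)
    (hc : ∀ w : W, (H.induce ({w}ᶜ : Set W)).Connected) :
    ∀ u v : W, u ≠ v → ∃ p q : H.Walk u v, p.IsPath ∧ q.IsPath ∧
      ∀ x, x ∈ p.support → x ∈ q.support → x = u ∨ x = v := by
  have hthird : ∀ u v : W, ∃ z : W, z ≠ u ∧ z ≠ v := by
    intro u v
    by_contra hcon
    push_neg at hcon
    have hsub : (Finset.univ : Finset W) ⊆ {u, v} := by
      intro z _
      rcases eq_or_ne z u with rfl | hzu
      · simp
      · simp [hcon z hzu]
    have := Finset.card_le_card hsub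
    rw [Finset.card_univ] at this
    have h2 : ({u, v} : Finset W).card ≤ 2 := Finset.card_insert_le u {v} |>.trans (by simp)
    omega
  have havoid : ∀ w x y : W, x ≠ w → y ≠ w → ∃ p : H.Walk x y, w ∉ p.support := by
    intro w x y hx hy
    have hx' : x ∈ ({w}ᶜ : Set W) := by simpa using hx
    have hy' : y ∈ ({w}ᶜ : Set W) := by simpa using hy
    have hr := (hc w).preconnected ⟨x, hx'⟩ ⟨y, hy'⟩
    obtain ⟨p, hp⟩ := walk_of_induce_reachable hr
    exact ⟨p, fun hw => by simpa using hp w hw⟩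
  have hpre : H.Preconnected := by
    intro x y
    obtain ⟨z, hzx, hzy⟩ := hthird x y
    obtain ⟨p, -⟩ := havoid z x y (Ne.symm hzx) (Ne.symm hzy)
    exact ⟨p⟩
  have hnonempty : Nonempty W :=
    Fintype.card_pos_iff.mp (Nat.lt_of_lt_of_le (by norm_num) hcard)
  have hconn : H.Connected := by
    haveI := hnonempty
    exact ⟨hpre⟩
  suffices h : ∀ (d : ℕ) (u v : W), u ≠ v → H.dist u v = d →
      ∃ p q : H.Walk u v, p.IsPath ∧ q.IsPath ∧
        ∀ x, x ∈ p.support → x ∈ q.support → x = u ∨ x = v by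
    exact fun u v huv => h _ u v huv rfl
  intro d
  induction d using Nat.strong_induction_on with
  | _ d ih =>
    intro u v huv hd
    match d, hd with
    | 0, hd =>
      exact absurd (hconn.dist_eq_zero_iff.mp hd) huv
    | 1, hd =>
      have hadj : H.Adj u v := dist_eq_one_iff_adj.mp hd
      refine ⟨Walk.cons hadj Walk.nil, Walk.cons hadj Walk.nil, ?_, ?_, ?_⟩
      · simp [hadj.ne]
      · simp [hadj.ne]
      · intro x hx _
        simp only [Walk.support_cons, Walk.support_nil, List.mem_cons, List.not_mem_nil,
          or_false] at hx
        tauto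
    | (d + 2), hd =>
      obtain ⟨p, hp⟩ := (hpre u v).exists_walk_length_eq_dist
      rw [hd] at hp
      have hsplit : ∀ {a b : W} (q : H.Walk a b), q.length ≠ 0 →
          ∃ (w : W) (r : H.Walk a w) (h : H.Adj w b), q = r.concat h ∧ r.length + 1 = q.length := by
        intro a b q
        induction q with
        | nil => simp
        | @cons a c b h q ihq =>
          intro _
          cases q with
          | nil => exact ⟨a, Walk.nil, h, rfl, by simp⟩
          | cons h' q' =>
            obtain ⟨w, r, hadj, heq, hlen⟩ := ihq (by simp)
            exact ⟨w, Walk.cons h r, hadj, by rw [Walk.concat_cons, ← heq], by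
              rw [Walk.length_cons, Walk.length_cons, ← hlen]⟩
      obtain ⟨w, r, hwv, -, hrlen⟩ := hsplit p (by omega)
      rw [hp] at hrlen
      have hdw1 : H.dist u w ≤ d + 1 := by
        have := H.dist_le r
        omega
      have hdw2 : d + 1 ≤ H.dist u w := by
        have ht := hconn.dist_triangle (u := u) (v := w) (w := v)
        have : H.dist w v ≤ 1 := H.dist_le (Walk.cons hwv Walk.nil)
        omega
      have hdw : H.dist u w = d + 1 := le_antisymm hdw1 hdw2
      have huw : u ≠ w := by
        intro h
        rw [h] at hdw
        rw [hconn.dist_eq_zero_iff.mpr rfl] at hdw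
        omega
      obtain ⟨P₁, P₂, h₁, h₂, hsep⟩ := ih (d + 1) (by omega) u w huw hdw
      have hvw : v ≠ w := fun h => (h ▸ hwv).ne rfl
      by_cases hv₁ : v ∈ P₁.support
      · exact step_mem h₁ h₂ hsep hv₁ huv.symm hvw hwv
      · by_cases hv₂ : v ∈ P₂.support
        · obtain ⟨p', q', hp', hq', hsep'⟩ :=
            step_mem h₂ h₁ (fun x a b => hsep x b a) hv₂ huv.symm hvw hwv
          exact ⟨p', q', hp', hq', hsep'⟩
        · obtain ⟨R₀, hwR₀⟩ := havoid w v u hvw huw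
          have hR₁path : R₀.bypass.IsPath := R₀.bypass_isPath
          have hwR₁ : w ∉ R₀.bypass.support := fun h => hwR₀ (R₀.support_bypass_subset h)
          obtain ⟨z, R, hSz, hfirst, hsub, hRpath⟩ :=
            exists_prefix_until (fun x => x ∈ P₁.support ∨ x ∈ P₂.support) R₀.bypass
              (Or.inl P₁.start_mem_support)
          have hwR : w ∉ R.support := fun h => hwR₁ (hsub w h)
          rcases hSz with hz | hz
          · exact step_notmem h₁ h₂ hsep hv₁ hv₂ huv.symm hwv (hRpath hR₁path) hz hfirst hwR
          · obtain ⟨p', q', hp', hq', hsep'⟩ :=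
              step_notmem h₂ h₁ (fun x a b => hsep x b a) hv₂ hv₁ huv.symm hwv
                (hRpath hR₁path) hz (fun x hx h => hfirst x hx h.symm) hwR
            exact ⟨p', q', hp', hq', hsep'⟩

section Arcs

variable {V : Type*} [DecidableEq V] {G : SimpleGraph V}

lemma end_mem_tail {x y : V} (p : G.Walk x y) (h : x ≠ y) : y ∈ p.support.tail := by
  have hend := p.end_mem_support
  rw [p.support_eq_cons, List.mem_cons] at hend
  rcases hend with h' | h'
  · exact absurd h'.symm h
  · exact h'

lemma cycle_arcs {a : V} {c : G.Walk a a} (hc : c.IsCycle) {b : V}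
    (hb : b ∈ c.support) (hab : b ≠ a) :
    (c.takeUntil b hb).IsPath ∧ (c.dropUntil b hb).IsPath ∧
      (∀ x, x ∈ (c.takeUntil b hb).support → x ∈ (c.dropUntil b hb).support →
        x = a ∨ x = b) := by
  set tk := c.takeUntil b hb with htk
  set dr := c.dropUntil b hb with hdr
  have hspec : tk.append dr = c := c.take_spec hb
  have hnd : c.support.tail.Nodup := hc.2
  have htail : c.support.tail = tk.support.tail ++ dr.support.tail := by
    rw [← hspec, Walk.tail_support_append]
  rw [htail, List.nodup_append] at hnd
  obtain ⟨hnd1, hnd2, hdisj⟩ := hnd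
  have hadr : a ∈ dr.support.tail := end_mem_tail dr hab
  have hbtk : b ∈ tk.support.tail := end_mem_tail tk (Ne.symm hab)
  have htkpath : tk.IsPath := by
    rw [Walk.isPath_def, tk.support_eq_cons, List.nodup_cons]
    exact ⟨fun h => hdisj _ h _ hadr rfl, hnd1⟩
  have hdrpath : dr.IsPath := by
    rw [Walk.isPath_def, dr.support_eq_cons, List.nodup_cons]
    exact ⟨fun h => hdisj _ hbtk _ h rfl, hnd2⟩
  refine ⟨htkpath, hdrpath, ?_⟩
  intro x hx hx'
  rw [tk.support_eq_cons, List.mem_cons] at hx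
  rw [dr.support_eq_cons, List.mem_cons] at hx'
  rcases hx with rfl | hx
  · exact Or.inl rfl
  · rcases hx' with rfl | hx'
    · exact Or.inr rfl
    · exact absurd rfl (hdisj _ hx _ hx')

/-- From a cycle `c` based at `a'` containing `b' ≠ a'`, extract a path from `a'` to `b'`
within the cycle's support whose length is at least half the cycle length. -/
lemma long_arc {a' : V} {c : G.Walk a' a'} (hc : c.IsCycle) {b' : V}
    (hb : b' ∈ c.support) (hab : b' ≠ a') :
    ∃ D : G.Walk a' b', D.IsPath ∧ (∀ x ∈ D.support, x ∈ c.support) ∧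
      c.length ≤ 2 * D.length := by
  obtain ⟨h1, h2, -⟩ := cycle_arcs hc hb hab
  have hlen : (c.takeUntil b' hb).length + (c.dropUntil b' hb).length = c.length := by
    have := congr_arg Walk.length (c.take_spec hb)
    rwa [Walk.length_append] at this
  by_cases hcase : c.length ≤ 2 * (c.takeUntil b' hb).length
  · exact ⟨c.takeUntil b' hb, h1, fun x hx => c.support_takeUntil_subset hb hx, hcase⟩
  · refine ⟨(c.dropUntil b' hb).reverse, h2.reverse, ?_, ?_⟩
    · intro x hx
      rw [Walk.support_reverse, List.mem_reverse] at hx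
      exact c.support_dropUntil_subset hb hx
    · rw [Walk.length_reverse]
      omega

end Arcs

section Apex

variable {V : Type*} {G : SimpleGraph V}

/-- The graph `G` together with two apex vertices attached to `A` and `B` respectively. -/
def Apex (G : SimpleGraph V) (A B : Set V) : SimpleGraph (V ⊕ Bool) where
  Adj x y :=
    match x, y with
    | Sum.inl a, Sum.inl b => G.Adj a b
    | Sum.inl a, Sum.inr i => cond i (a ∈ B) (a ∈ A)
    | Sum.inr i, Sum.inl a => cond i (a ∈ B) (a ∈ A)
    | Sum.inr _, Sum.inr _ => False
  symm := by
    constructor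
    rintro (a | i) (b | j) h
    · exact h.symm
    · exact h
    · exact h
    · exact h.elim
  loopless := by
    constructor
    rintro (a | i) h
    · exact G.irrefl h
    · exact h

lemma apex_adj_inl_inl {A B : Set V} {a b : V} :
    (Apex G A B).Adj (Sum.inl a) (Sum.inl b) ↔ G.Adj a b := Iff.rfl

lemma apex_project {A B : Set V} :
    ∀ {x y : V ⊕ Bool} (p : (Apex G A B).Walk x y),
      (∀ z ∈ p.support, ∃ c : V, z = Sum.inl c) →
      ∀ {a b : V}, x = Sum.inl a → y = Sum.inl b →
      ∃ P : G.Walk a b, p.support = P.support.map Sum.inl := by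
  intro x y p
  induction p with
  | nil =>
    intro _ a b hx hy
    subst hx
    obtain rfl : a = b := by injection hy
    exact ⟨Walk.nil, by simp⟩
  | @cons x m y h q ihq =>
    intro hp a b hx hy
    obtain ⟨c, rfl⟩ := hp m (by simp)
    obtain ⟨Q, hQ⟩ := ihq (fun z hz => hp z (by simp [hz])) rfl hy
    subst hx
    have hG : G.Adj a c := h
    exact ⟨Walk.cons hG Q, by rw [Walk.support_cons, hQ, Walk.support_cons, List.map_cons]⟩

lemma walk_concat_split {a b : V} (q : G.Walk a b) (h : q.length ≠ 0) :
    ∃ (w : V) (r : G.Walk a w) (had : G.Adj w b), q = r.concat had := by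
  induction q with
  | nil => simp at h
  | @cons a c b hadj q ihq =>
    cases q with
    | nil => exact ⟨a, Walk.nil, hadj, rfl⟩
    | cons h' q' =>
      obtain ⟨w, r, had, heq⟩ := ihq (by simp)
      exact ⟨w, Walk.cons hadj r, had, by rw [Walk.concat_cons, ← heq]⟩

lemma apex_strip {A B : Set V} {q : (Apex G A B).Walk (Sum.inr false) (Sum.inr true)}
    (hq : q.IsPath) :
    ∃ (a b : V) (P : G.Walk a b), P.IsPath ∧ a ∈ A ∧ b ∈ B ∧
      ∀ x ∈ P.support, Sum.inl x ∈ q.support := by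
  cases q with
  | cons h r =>
    rename_i m
    match m, h, r with
    | Sum.inr _, h, r => exact h.elim
    | Sum.inl a₁, h, r =>
      have ha₁ : a₁ ∈ A := h
      have hrlen : r.length ≠ 0 := by
        intro h0
        exact absurd (Walk.eq_of_length_eq_zero h0) (by simp)
      obtain ⟨w', t, had, heq⟩ := walk_concat_split r hrlen
      match w', had, t, heq with
      | Sum.inr _, had, t, heq => exact had.elim
      | Sum.inl b₁, had, t, heq =>
        have hb₁ : b₁ ∈ B := had
        have hrpath : r.IsPath := (Walk.cons_isPath_iff _ _).mp hq |>.1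
        have hfalse : Sum.inr false ∉ r.support := (Walk.cons_isPath_iff _ _).mp hq |>.2
        have hrs : r.support = t.support ++ [Sum.inr true] := by
          rw [heq, Walk.support_concat]
        have htrue : Sum.inr true ∉ t.support := by
          have hnd := hrpath.support_nodup
          rw [hrs, List.nodup_append] at hnd
          exact fun hmem => hnd.2.2 _ hmem _ (by simp) rfl
        have hall : ∀ z ∈ t.support, ∃ c : V, z = Sum.inl c := by
          intro z hz
          match z with
          | Sum.inl c => exact ⟨c, rfl⟩
          | Sum.inr true => exact absurd hz htrue
          | Sum.inr false =>
            exact absurd (by rw [hrs]; exact List.mem_append_left _ hz) hfalse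
        obtain ⟨P, hP⟩ := apex_project t hall rfl rfl
        have hPpath : P.IsPath := by
          rw [Walk.isPath_def]
          have := hrpath.support_nodup
          rw [hrs, List.nodup_append] at this
          have h1 : t.support.Nodup := this.1
          rw [hP] at h1
          exact h1.of_map _
        refine ⟨a₁, b₁, P, hPpath, ha₁, hb₁, ?_⟩
        intro x hx
        have : Sum.inl x ∈ t.support := by rw [hP]; exact List.mem_map_of_mem hx
        rw [Walk.support_cons]
        exact List.mem_cons_of_mem _ (by rw [hrs]; exact List.mem_append_left _ this)

end Apex

section MoreHelpers

variable {V : Type*} {G : SimpleGraph V}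

lemma trim_path {A B : V → Prop} {a b : V} (P : G.Walk a b) (hP : P.IsPath)
    (ha : A a) (hb : B b) :
    ∃ (a' b' : V) (P' : G.Walk a' b'), P'.IsPath ∧ (∀ x ∈ P'.support, x ∈ P.support) ∧
      A a' ∧ B b' ∧ (∀ x ∈ P'.support, A x → x = a') ∧ (∀ x ∈ P'.support, B x → x = b') := by
  obtain ⟨z, P₁, hBz, hBfirst, hsub₁, hpath₁⟩ := exists_prefix_until B P hb
  obtain ⟨z', R, hAz, hAfirst, hsub₂, hpath₂⟩ :=
    exists_prefix_until A P₁.reverse (by simpa using ha)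
  refine ⟨z', z, R.reverse, (hpath₂ (hpath₁ hP).reverse).reverse, ?_, hAz, hBz, ?_, ?_⟩
  · intro x hx
    rw [Walk.support_reverse, List.mem_reverse] at hx
    have := hsub₂ x hx
    rw [Walk.support_reverse, List.mem_reverse] at this
    exact hsub₁ x this
  · intro x hx hAx
    rw [Walk.support_reverse, List.mem_reverse] at hx
    exact hAfirst x hx hAx
  · intro x hx hBx
    rw [Walk.support_reverse, List.mem_reverse] at hx
    have := hsub₂ x hx
    rw [Walk.support_reverse, List.mem_reverse] at this
    exact hBfirst x this hBx

lemma two_mem_of_cycle {a : V} {c : G.Walk a a} (hc : c.IsCycle) :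
    ∃ x y : V, x ∈ c.support ∧ y ∈ c.support ∧ x ≠ y := by
  cases c with
  | nil => exact absurd hc Walk.IsCycle.not_of_nil
  | cons h r =>
    rename_i m
    exact ⟨a, m, Walk.start_mem_support _, by simp, h.ne⟩

lemma end_mem_tail_closed {a : V} {c : G.Walk a a} (h : c.length ≠ 0) :
    a ∈ c.support.tail := by
  cases c with
  | nil => simp at h
  | cons h' r => simpa using r.end_mem_support

lemma mem_support_rotate [DecidableEq V] {a x : V} {c : G.Walk a a} (hlen : c.length ≠ 0)
    {b : V} (hb : b ∈ c.support) :
    x ∈ (c.rotate _ hb).support ↔ x ∈ c.support := by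
  have hlenrot : (c.rotate _ hb).length = c.length := by
    have hspec := congr_arg Walk.length (c.take_spec hb)
    rw [Walk.length_append] at hspec
    rw [Walk.rotate, Walk.length_append]
    omega
  have hperm := (Walk.support_rotate c _ hb).perm
  constructor
  · intro hx
    rw [(c.rotate _ hb).support_eq_cons, List.mem_cons] at hx
    rcases hx with rfl | hx
    · exact hb
    · exact List.mem_of_mem_tail (hperm.mem_iff.mp hx)
  · intro hx
    rw [c.support_eq_cons, List.mem_cons] at hx
    rcases hx with rfl | hx
    · exact List.mem_of_mem_tail (hperm.mem_iff.mpr (end_mem_tail_closed hlen))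
    · exact List.mem_of_mem_tail (hperm.mem_iff.mpr hx)

end MoreHelpers

lemma length_rotate' {V : Type*} [DecidableEq V] {G : SimpleGraph V} {a b : V}
    {c : G.Walk a a} (hb : b ∈ c.support) : (c.rotate _ hb).length = c.length := by
  have hspec := congr_arg Walk.length (c.take_spec hb)
  rw [Walk.length_append] at hspec
  rw [Walk.rotate, Walk.length_append]
  omega

/-- `c` is a longest cycle in `G`: it is a cycle and its length is at least
the length of every cycle in `G`. -/
def IsLongestCycle {V : Type*} (G : SimpleGraph V) {v : V} (c : G.Walk v v) : Prop :=
  c.IsCycle ∧ ∀ (u : V) (c' : G.Walk u u), c'.IsCycle → c'.length ≤ c.length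

theorem longest_cycles_intersect_in_two_connected
    (V : Type) [Fintype V] (G : SimpleGraph V)
    -- `G` is 2-connected:
    (hcard : 2 < Fintype.card V)
    (hconn : ∀ w : V, (G.induce ({w}ᶜ : Set V)).Connected)
    (u v : V) (c1 : G.Walk u u) (c2 : G.Walk v v)
    (h1 : IsLongestCycle G c1) (h2 : IsLongestCycle G c2) :
    ∃ x : V, x ∈ c1.support ∧ x ∈ c2.support := by
  classical
  by_contra hcon
  push_neg at hcon
  obtain ⟨hc1, hmax1⟩ := h1
  obtain ⟨hc2, hmax2⟩ := h2
  have hl12 : c1.length = c2.length := le_antisymm (hmax2 u c1 hc1) (hmax1 v c2 hc2)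
  have hl3 : 3 ≤ c1.length := hc1.three_le_length
  set A : Set V := {x | x ∈ c1.support} with hA
  set B : Set V := {x | x ∈ c2.support} with hB
  have hdisjAB : ∀ x, x ∈ A → x ∈ B → False := fun x hx hy => hcon x hx hy
  have hGavoid : ∀ w₀ x y : V, x ≠ w₀ → y ≠ w₀ → ∃ p : G.Walk x y, w₀ ∉ p.support := by
    intro w₀ x y hx hy
    have hx' : x ∈ ({w₀}ᶜ : Set V) := by simpa using hx
    have hy' : y ∈ ({w₀}ᶜ : Set V) := by simpa using hy
    obtain ⟨p, hp⟩ := walk_of_induce_reachable ((hconn w₀).preconnected ⟨x, hx'⟩ ⟨y, hy'⟩)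
    exact ⟨p, fun hw => by simpa using hp w₀ hw⟩
  have hthird : ∀ x y : V, ∃ z : V, z ≠ x ∧ z ≠ y := by
    intro x y
    by_contra hcon'
    push_neg at hcon'
    have hsub : (Finset.univ : Finset V) ⊆ {x, y} := by
      intro z _
      rcases eq_or_ne z x with rfl | hzx
      · simp
      · simp [hcon' z hzx]
    have := Finset.card_le_card hsub
    rw [Finset.card_univ] at this
    have h2 : ({x, y} : Finset V).card ≤ 2 := Finset.card_insert_le x {y} |>.trans (by simp)
    omega
  have hGany : ∀ x y : V, ∃ _p : G.Walk x y, True := by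
    intro x y
    obtain ⟨z, hzx, hzy⟩ := hthird x y
    obtain ⟨p, -⟩ := hGavoid z x y (Ne.symm hzx) (Ne.symm hzy)
    exact ⟨p, trivial⟩
  have hAex : ∀ w₀ : V, ∃ a₀, a₀ ∈ A ∧ a₀ ≠ w₀ := by
    intro w₀
    obtain ⟨x, y, hx, hy, hxy⟩ := two_mem_of_cycle hc1
    rcases eq_or_ne x w₀ with rfl | h
    · exact ⟨y, hy, Ne.symm hxy⟩
    · exact ⟨x, hx, h⟩
  have hBex : ∀ w₀ : V, ∃ b₀, b₀ ∈ B ∧ b₀ ≠ w₀ := by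
    intro w₀
    obtain ⟨x, y, hx, hy, hxy⟩ := two_mem_of_cycle hc2
    rcases eq_or_ne x w₀ with rfl | h
    · exact ⟨y, hy, Ne.symm hxy⟩
    · exact ⟨x, hx, h⟩
  have huA : u ∈ A := c1.start_mem_support
  have hvB : v ∈ B := c2.start_mem_support
  set H : SimpleGraph (V ⊕ Bool) := Apex G A B with hH
  have hι : ∀ {x y : V} (p : G.Walk x y), ∃ q : H.Walk (Sum.inl x) (Sum.inl y),
      ∀ z ∈ q.support, ∃ t, z = Sum.inl t ∧ t ∈ p.support := by
    intro x y p
    refine ⟨p.map ⟨Sum.inl, fun hadj => hadj⟩, ?_⟩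
    intro z hz
    rw [Walk.support_map, List.mem_map] at hz
    obtain ⟨t, ht, rfl⟩ := hz
    exact ⟨t, rfl, ht⟩
  have hcardH : 3 ≤ Fintype.card (V ⊕ Bool) := by
    rw [Fintype.card_sum, Fintype.card_bool]
    omega
  have hcH : ∀ w : V ⊕ Bool, (H.induce ({w}ᶜ : Set (V ⊕ Bool))).Connected := by
    rintro (w₀ | i)
    · -- removing an original vertex
      apply induce_connected_of_walks (hne := ⟨Sum.inr false, by simp⟩)
      have hclaim : ∀ x ∈ ({Sum.inl w₀}ᶜ : Set (V ⊕ Bool)),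
          ∃ (t : V) (p : H.Walk x (Sum.inl t)), t ≠ w₀ ∧
            ∀ z ∈ p.support, z ∈ ({Sum.inl w₀}ᶜ : Set (V ⊕ Bool)) := by
        rintro (x₀ | j) hx
        · refine ⟨x₀, Walk.nil, by simpa using hx, ?_⟩
          intro z hz
          simp only [Walk.support_nil, List.mem_singleton] at hz
          subst hz
          exact hx
        · cases j with
          | false =>
            obtain ⟨a₀, ha₀, ha₀w⟩ := hAex w₀
            have hadj : H.Adj (Sum.inr false) (Sum.inl a₀) := ha₀
            refine ⟨a₀, Walk.cons hadj Walk.nil, ha₀w, ?_⟩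
            intro z hz
            simp only [Walk.support_cons, Walk.support_nil, List.mem_cons, List.not_mem_nil,
              or_false] at hz
            rcases hz with rfl | rfl
            · simp
            · simp [ha₀w]
          | true =>
            obtain ⟨b₀, hb₀, hb₀w⟩ := hBex w₀
            have hadj : H.Adj (Sum.inr true) (Sum.inl b₀) := hb₀
            refine ⟨b₀, Walk.cons hadj Walk.nil, hb₀w, ?_⟩
            intro z hz
            simp only [Walk.support_cons, Walk.support_nil, List.mem_cons, List.not_mem_nil,
              or_false] at hz
            rcases hz with rfl | rfl
            · simp
            · simp [hb₀w]
      intro x hx y hy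
      obtain ⟨t₁, p₁, ht₁, hp₁⟩ := hclaim x hx
      obtain ⟨t₂, p₂, ht₂, hp₂⟩ := hclaim y hy
      obtain ⟨m, hm⟩ := hGavoid w₀ t₁ t₂ ht₁ ht₂
      obtain ⟨q, hq⟩ := hι m
      refine ⟨p₁.append (q.append p₂.reverse), ?_⟩
      intro z hz
      rw [Walk.mem_support_append_iff] at hz
      rcases hz with hz | hz
      · exact hp₁ z hz
      · rw [Walk.mem_support_append_iff] at hz
        rcases hz with hz | hz
        · obtain ⟨t, rfl, htm⟩ := hq z hz
          simp only [Set.mem_compl_iff, Set.mem_singleton_iff]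
          intro hcontra
          rw [Sum.inl.injEq] at hcontra
          exact hm (hcontra ▸ htm)
        · rw [Walk.support_reverse, List.mem_reverse] at hz
          exact hp₂ z hz
    · -- removing an apex vertex
      apply induce_connected_of_walks (hne := ⟨Sum.inl u, by simp⟩)
      have hclaim : ∀ x ∈ ({Sum.inr i}ᶜ : Set (V ⊕ Bool)),
          ∃ (t : V) (p : H.Walk x (Sum.inl t)),
            ∀ z ∈ p.support, z ∈ ({Sum.inr i}ᶜ : Set (V ⊕ Bool)) := by
        rintro (x₀ | j) hx
        · refine ⟨x₀, Walk.nil, ?_⟩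
          intro z hz
          simp only [Walk.support_nil, List.mem_singleton] at hz
          subst hz
          simp
        · have hji : j ≠ i := by simpa using hx
          cases j with
          | false =>
            have hadj : H.Adj (Sum.inr false) (Sum.inl u) := huA
            refine ⟨u, Walk.cons hadj Walk.nil, ?_⟩
            intro z hz
            simp only [Walk.support_cons, Walk.support_nil, List.mem_cons, List.not_mem_nil,
              or_false] at hz
            rcases hz with rfl | rfl
            · simpa using hji
            · simp
          | true =>
            have hadj : H.Adj (Sum.inr true) (Sum.inl v) := hvB
            refine ⟨v, Walk.cons hadj Walk.nil, ?_⟩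
            intro z hz
            simp only [Walk.support_cons, Walk.support_nil, List.mem_cons, List.not_mem_nil,
              or_false] at hz
            rcases hz with rfl | rfl
            · simpa using hji
            · simp
      intro x hx y hy
      obtain ⟨t₁, p₁, hp₁⟩ := hclaim x hx
      obtain ⟨t₂, p₂, hp₂⟩ := hclaim y hy
      obtain ⟨m, -⟩ := hGany t₁ t₂
      obtain ⟨q, hq⟩ := hι m
      refine ⟨p₁.append (q.append p₂.reverse), ?_⟩
      intro z hz
      rw [Walk.mem_support_append_iff] at hz
      rcases hz with hz | hz
      · exact hp₁ z hz
      · rw [Walk.mem_support_append_iff] at hz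
        rcases hz with hz | hz
        · obtain ⟨t, rfl, -⟩ := hq z hz
          simp
        · rw [Walk.support_reverse, List.mem_reverse] at hz
          exact hp₂ z hz
  obtain ⟨q₁, q₂, hq₁, hq₂, hqsep⟩ := twoConn H hcardH hcH (Sum.inr false) (Sum.inr true)
    (by simp)
  obtain ⟨a₁, b₁, P₀, hP₀, ha₁, hb₁, hP₀sub⟩ := apex_strip hq₁
  obtain ⟨a₂, b₂, Q₀, hQ₀, ha₂, hb₂, hQ₀sub⟩ := apex_strip hq₂
  have hPQ : ∀ x, x ∈ P₀.support → x ∈ Q₀.support → False := by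
    intro x hxP hxQ
    rcases hqsep (Sum.inl x) (hP₀sub x hxP) (hQ₀sub x hxQ) with h | h <;> simp at h
  obtain ⟨a₁', b₁', P, hPpath, hPsub, ha₁', hb₁', hPA, hPB⟩ :=
    trim_path (A := fun x => x ∈ A) (B := fun x => x ∈ B) P₀ hP₀ ha₁ hb₁
  obtain ⟨a₂', b₂', Q, hQpath, hQsub, ha₂', hb₂', hQA, hQB⟩ :=
    trim_path (A := fun x => x ∈ A) (B := fun x => x ∈ B) Q₀ hQ₀ ha₂ hb₂
  have hPQ' : ∀ x, x ∈ P.support → x ∈ Q.support → False :=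
    fun x hx hy => hPQ x (hPsub x hx) (hQsub x hy)
  have hne_a : a₁' ≠ a₂' := fun h => hPQ' a₁' P.start_mem_support (h ▸ Q.start_mem_support)
  have hne_b : b₁' ≠ b₂' := fun h => hPQ' b₁' P.end_mem_support (h ▸ Q.end_mem_support)
  have hPlen : 1 ≤ P.length := by
    rcases Nat.eq_zero_or_pos P.length with h0 | h
    · exact absurd (Walk.eq_of_length_eq_zero h0 ▸ hb₁') (fun h => hdisjAB _ ha₁' h)
    · exact h
  have hQlen : 1 ≤ Q.length := by
    rcases Nat.eq_zero_or_pos Q.length with h0 | h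
    · exact absurd (Walk.eq_of_length_eq_zero h0 ▸ hb₂') (fun h => hdisjAB _ ha₂' h)
    · exact h
  -- long arc in c1 from a₁' to a₂'
  have hc1len : c1.length ≠ 0 := by omega
  have hc2len : c2.length ≠ 0 := by omega
  have hc1'cyc : (c1.rotate _ ha₁').IsCycle := hc1.rotate ha₁'
  have hmema2 : a₂' ∈ (c1.rotate _ ha₁').support := (mem_support_rotate hc1len ha₁').mpr ha₂'
  obtain ⟨D1, hD1path, hD1sub, hD1len⟩ := long_arc hc1'cyc hmema2 (Ne.symm hne_a)
  rw [length_rotate' ha₁'] at hD1len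
  have hD1A : ∀ x ∈ D1.support, x ∈ A :=
    fun x hx => (mem_support_rotate hc1len ha₁').mp (hD1sub x hx)
  -- long arc in c2 from b₂' to b₁'
  have hc2'cyc : (c2.rotate _ hb₂').IsCycle := hc2.rotate hb₂'
  have hmemb1 : b₁' ∈ (c2.rotate _ hb₂').support := (mem_support_rotate hc2len hb₂').mpr hb₁'
  obtain ⟨D2, hD2path, hD2sub, hD2len⟩ := long_arc hc2'cyc hmemb1 hne_b
  rw [length_rotate' hb₂'] at hD2len
  have hD2B : ∀ x ∈ D2.support, x ∈ B :=
    fun x hx => (mem_support_rotate hc2len hb₂').mp (hD2sub x hx)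
  have hD1_2 : 2 ≤ D1.length := by omega
  have hD2_2 : 2 ≤ D2.length := by omega
  cases D1 with
  | nil => simp at hD1_2
  | cons hadj D1' =>
    rename_i m
    rw [Walk.cons_isPath_iff] at hD1path
    obtain ⟨hD1'path, hstart⟩ := hD1path
    have hD1'A : ∀ x ∈ D1'.support, x ∈ A := fun x hx => hD1A x (by simp [hx])
    have hT3 : (D2.append P.reverse).IsPath := by
      refine append_isPath hD2path hPpath.reverse ?_
      intro x hx hx'
      rw [Walk.support_reverse, List.mem_reverse] at hx'
      exact hPB x hx' (hD2B x hx)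
    have hT2 : (Q.append (D2.append P.reverse)).IsPath := by
      refine append_isPath hQpath hT3 ?_
      intro x hx hx'
      rw [Walk.mem_support_append_iff] at hx'
      rcases hx' with hx' | hx'
      · exact hQB x hx (hD2B x hx')
      · rw [Walk.support_reverse, List.mem_reverse] at hx'
        exact absurd (hPQ' x hx' hx) (fun h => h)
    have hTpath : (D1'.append (Q.append (D2.append P.reverse))).IsPath := by
      refine append_isPath hD1'path hT2 ?_
      intro x hx hx'
      rw [Walk.mem_support_append_iff] at hx'
      rcases hx' with hx' | hx'
      · exact hQA x hx' (hD1'A x hx)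
      · rw [Walk.mem_support_append_iff] at hx'
        rcases hx' with hx' | hx'
        · exact absurd (hdisjAB x (hD1'A x hx) (hD2B x hx')) (fun h => h)
        · rw [Walk.support_reverse, List.mem_reverse] at hx'
          have : x = a₁' := hPA x hx' (hD1'A x hx)
          exact absurd (this ▸ hx) hstart
    set T := D1'.append (Q.append (D2.append P.reverse)) with hTdef
    have hnoedge : s(a₁', m) ∉ T.edges := by
      intro he
      have hTrev : T.reverse.IsPath := hTpath.reverse
      have he' : s(a₁', m) ∈ T.reverse.edges := by
        rw [Walk.edges_reverse, List.mem_reverse]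
        exact he
      obtain ⟨h', q', hq'eq⟩ := start_edge hTrev he'
      have hq'path : q'.IsPath := by
        rw [hq'eq, Walk.cons_isPath_iff] at hTrev
        exact hTrev.1
      have hq'0 : q'.length = 0 := by
        by_contra h0
        have hmem := end_mem_tail_closed (c := q') h0
        have hnd := hq'path.support_nodup
        rw [q'.support_eq_cons, List.nodup_cons] at hnd
        exact hnd.1 hmem
      have hT1 : T.length = 1 := by
        have := congr_arg Walk.length hq'eq
        rw [Walk.length_reverse, Walk.length_cons, hq'0] at this
        omega
      have hTbig : T.length = D1'.length + (Q.length + (D2.length + P.length)) := by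
        rw [hTdef]
        simp [Walk.length_append, Walk.length_reverse]
      omega
    have hcyc : (Walk.cons hadj T).IsCycle := (Walk.cons_isCycle_iff T hadj).mpr ⟨hTpath, hnoedge⟩
    have hle := hmax1 a₁' (Walk.cons hadj T) hcyc
    have hlenbig : (Walk.cons hadj T).length = 1 + (D1'.length + (Q.length + (D2.length + P.length))) := by
      rw [hTdef]
      simp [Walk.length_append, Walk.length_reverse, Walk.length_cons]
      omega
    have hD1len' : (Walk.cons hadj D1').length = D1'.length + 1 := Walk.length_cons _ _
    omega
end

section
/- Let G be a connected vertex-transitive finite simple graph on n ≥ 3 vertices and let S ⊆ V(G) be a set of vertices that intersects the vertex set of every longest path of G. Then G contains a path P with |S| · |V(P)| ≥ n; in particular, G contains a path of length at least n/|S| − 1. -/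
open SimpleGraph

/-- `p` is a longest path in `G`: it is a path and its length is at least
the length of every path in `G`. -/
def IsLongestPath {V : Type*} (G : SimpleGraph V) {a b : V} (p : G.Walk a b) : Prop :=
  p.IsPath ∧ ∀ (c d : V) (q : G.Walk c d), q.IsPath → q.length ≤ p.length

lemma exists_longest_path {V : Type} [Fintype V] [Nonempty V] (G : SimpleGraph V) :
    ∃ (a b : V) (p : G.Walk a b), IsLongestPath G p := by
  classical
  set A : Set ℕ := {n | ∃ (a b : V) (q : G.Walk a b), q.IsPath ∧ q.length = n} with hA
  have hne : A.Nonempty := by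
    obtain ⟨v⟩ := ‹Nonempty V›
    exact ⟨0, v, v, Walk.nil, Walk.IsPath.nil, rfl⟩
  have hbdd : BddAbove A := by
    refine ⟨Fintype.card V, ?_⟩
    rintro n ⟨a, b, q, hq, rfl⟩
    exact hq.length_lt.le
  obtain ⟨a, b, q, hq, hlen⟩ := Nat.sSup_mem hne hbdd
  refine ⟨a, b, q, hq, fun c d r hr => ?_⟩
  rw [hlen]
  exact le_csSup hbdd ⟨c, d, r, hr, rfl⟩

lemma IsLongestPath.map {V : Type} {G : SimpleGraph V} {a b : V} {p : G.Walk a b}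
    (hp : IsLongestPath G p) (φ : G ≃g G) :
    IsLongestPath G (p.map φ.toHom) := by
  refine ⟨Walk.map_isPath_of_injective φ.injective hp.1, fun c d q hq => ?_⟩
  rw [Walk.length_map]
  exact hp.2 c d q hq

lemma key_count {V : Type} [Fintype V] (G : SimpleGraph V)
    (htrans : ∀ u v : V, ∃ φ : G ≃g G, φ u = v)
    (S : Finset V)
    (hS : ∀ (a b : V) (p : G.Walk a b), IsLongestPath G p → ∃ s ∈ S, s ∈ p.support)
    {a₀ b₀ : V} (p₀ : G.Walk a₀ b₀) (hp₀ : IsLongestPath G p₀) :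
    Fintype.card V ≤ S.card * (p₀.length + 1) := by
  classical
  have hlen : ∀ {a b : V} (q : G.Walk a b), IsLongestPath G q → q.length = p₀.length :=
    fun q hq => le_antisymm (hp₀.2 _ _ q hq.1) (hq.2 _ _ p₀ hp₀.1)
  let LP := Σ a : V, Σ b : V, {q : G.Walk a b // IsLongestPath G q}
  haveI hfin : ∀ a b : V, Finite {q : G.Walk a b // IsLongestPath G q} := fun a b =>
    Finite.of_injective
      (fun q => (⟨q.1, q.2.1, hlen q.1 q.2⟩ :
        {q : G.Walk a b // q.IsPath ∧ q.length = p₀.length}))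
      (by intro x y h
          have hv : (x : G.Walk a b) = (y : G.Walk a b) := by simpa [Subtype.ext_iff] using h
          exact Subtype.ext hv)
  haveI : Fintype LP := Fintype.ofFinite _
  let k : V → ℕ := fun v => (Finset.univ.filter (fun q : LP => v ∈ q.2.2.1.support)).card
  have hmono : ∀ v w : V, k v ≤ k w := by
    intro v w
    obtain ⟨φ, hφ⟩ := htrans v w
    apply Finset.card_le_card_of_injOn
      (fun q : LP => (⟨φ q.1, φ q.2.1, ⟨q.2.2.1.map φ.toHom, q.2.2.2.map φ⟩⟩ : LP))
    · rintro ⟨a, b, q, hq⟩ hmem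
      simp only [Finset.coe_filter, Set.mem_setOf_eq, Finset.mem_univ, true_and] at hmem ⊢
      rw [Walk.support_map]
      exact hφ ▸ List.mem_map_of_mem (f := φ) hmem
    · rintro ⟨a, b, q, hq⟩ - ⟨a', b', q', hq'⟩ - h
      have ha : a = a' := φ.injective (congrArg Sigma.fst h)
      subst ha
      have h2 : (⟨φ b, ⟨q.map φ.toHom, hq.map φ⟩⟩ : Σ b : V, {q : G.Walk (φ a) b // IsLongestPath G q})
          = ⟨φ b', ⟨q'.map φ.toHom, hq'.map φ⟩⟩ := eq_of_heq (Sigma.mk.inj_iff.mp h).2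
      have hb : b = b' := φ.injective (congrArg Sigma.fst h2)
      subst hb
      have h3 : q.map φ.toHom = q'.map φ.toHom :=
        Subtype.ext_iff.mp (eq_of_heq (Sigma.mk.inj_iff.mp h2).2)
      have hq : q = q' := Walk.map_injective_of_injective φ.injective a b h3
      subst hq
      rfl
  have hkconst : ∀ v : V, k v = k a₀ := fun v => le_antisymm (hmono v a₀) (hmono a₀ v)
  have hcardfilter : ∀ q : LP,
      (Finset.univ.filter (fun v : V => v ∈ q.2.2.1.support)).card = p₀.length + 1 := by
    intro q
    have hnd := q.2.2.2.1.support_nodup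
    have heq : (Finset.univ.filter (fun v : V => v ∈ q.2.2.1.support))
        = q.2.2.1.support.toFinset := by
      ext v; simp
    rw [heq, List.toFinset_card_of_nodup hnd, Walk.length_support, hlen q.2.2.1 q.2.2.2]
  have hswap : ∀ (T : Finset V), ∑ s ∈ T, k s
      = ∑ q : LP, (T.filter (fun s => s ∈ q.2.2.1.support)).card := by
    intro T
    simp only [k, Finset.card_filter]
    exact Finset.sum_comm
  have huniv : Fintype.card V * k a₀ = Fintype.card LP * (p₀.length + 1) := by
    have h1 : ∑ v : V, k v = Fintype.card V * k a₀ := by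
      rw [Finset.sum_congr rfl (fun v _ => hkconst v), Finset.sum_const, smul_eq_mul,
        Finset.card_univ]
    have h2 := hswap Finset.univ
    rw [h1] at h2
    rw [h2, Finset.sum_congr rfl (fun q _ => hcardfilter q), Finset.sum_const, smul_eq_mul,
      Finset.card_univ]
  have hk1 : 0 < k a₀ := by
    apply Finset.card_pos.mpr
    exact ⟨⟨a₀, b₀, p₀, hp₀⟩, by
      simp only [Finset.mem_filter, Finset.mem_univ, true_and]
      exact Walk.start_mem_support p₀⟩
  have hSsum : Fintype.card LP ≤ S.card * k a₀ := by
    have h1 : ∑ s ∈ S, k s = S.card * k a₀ := by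
      rw [Finset.sum_congr rfl (fun s _ => hkconst s), Finset.sum_const, smul_eq_mul]
    rw [← h1, hswap S]
    calc Fintype.card LP = ∑ _q : LP, 1 := by
          rw [Finset.sum_const, smul_eq_mul, mul_one, Finset.card_univ]
      _ ≤ _ := by
          apply Finset.sum_le_sum
          intro q _
          apply Finset.card_pos.mpr
          obtain ⟨s, hsS, hs⟩ := hS _ _ q.2.2.1 q.2.2.2
          exact ⟨s, Finset.mem_filter.mpr ⟨hsS, hs⟩⟩
  have : Fintype.card V * k a₀ ≤ S.card * (p₀.length + 1) * k a₀ := by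
    calc Fintype.card V * k a₀ = Fintype.card LP * (p₀.length + 1) := huniv
      _ ≤ S.card * k a₀ * (p₀.length + 1) := Nat.mul_le_mul_right _ hSsum
      _ = S.card * (p₀.length + 1) * k a₀ := by ring
  exact Nat.le_of_mul_le_mul_right this hk1

theorem path_transversal_lower_bound
    (V : Type) [Fintype V] (G : SimpleGraph V)
    (hconn : G.Connected) (htrans : ∀ u v : V, ∃ φ : G ≃g G, φ u = v)
    (hn : 3 ≤ Fintype.card V)
    (S : Finset V)
    -- `S` intersects the vertex set of every longest path of `G`:
    (hS : ∀ (a b : V) (p : G.Walk a b), IsLongestPath G p → ∃ s ∈ S, s ∈ p.support) :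
    ∃ (a b : V) (p : G.Walk a b), p.IsPath ∧
      Fintype.card V ≤ S.card * (p.length + 1) ∧
      (Fintype.card V : ℝ) / (S.card : ℝ) - 1 ≤ (p.length : ℝ) := by
  haveI : Nonempty V := Fintype.card_pos_iff.mp (by omega)
  obtain ⟨a, b, p, hp⟩ := exists_longest_path G
  have hkey : Fintype.card V ≤ S.card * (p.length + 1) := key_count G htrans S hS p hp
  have hSpos : 0 < S.card := by
    by_contra h
    push_neg at h
    interval_cases hsc : S.card <;> omega
  refine ⟨a, b, p, hp.1, hkey, ?_⟩
  have hSpos' : (0 : ℝ) < (S.card : ℝ) := by exact_mod_cast hSpos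
  rw [sub_le_iff_le_add, div_le_iff₀ hSpos']
  have : (Fintype.card V : ℝ) ≤ (S.card : ℝ) * ((p.length : ℝ) + 1) := by
    exact_mod_cast hkey
  linarith [this]
end

section
/- Let G be a connected vertex-transitive finite simple graph on n ≥ 3 vertices and let S ⊆ V(G) be a set of vertices that intersects the vertex set of every longest cycle of G. Then G contains a cycle C with |S| · length(C) ≥ n; in particular, G contains a cycle of length at least n/|S|. -/
open SimpleGraph

section Aux

open scoped Classical

variable {V : Type} [Fintype V] {G : SimpleGraph V}

/-- Build a graph isomorphism from a permutation preserving adjacency. -/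
private def mkIso (G : SimpleGraph V) (e : Equiv.Perm V)
    (he : ∀ a b : V, G.Adj (e a) (e b) ↔ G.Adj a b) : G ≃g G :=
  { toEquiv := e, map_rel_iff' := fun {a b} => he a b }

@[simp] private lemma mkIso_apply (G : SimpleGraph V) (e : Equiv.Perm V)
    (he : ∀ a b : V, G.Adj (e a) (e b) ↔ G.Adj a b) (a : V) :
    mkIso G e he a = e a := rfl

/-- Degrees are equal in a vertex-transitive graph. -/
private lemma aux_deg (htrans : ∀ u v : V, ∃ φ : G ≃g G, φ u = v) (u v : V) :
    G.degree u = G.degree v := by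
  obtain ⟨φ, hφ⟩ := htrans u v
  have h := Fintype.card_congr (φ.mapNeighborSet u)
  rw [hφ] at h
  rw [← card_neighborSet_eq_degree, ← card_neighborSet_eq_degree]
  exact h

/-- A connected vertex-transitive graph on at least 3 vertices has a cycle. -/
private lemma aux_exists_cycle (hconn : G.Connected)
    (htrans : ∀ u v : V, ∃ φ : G ≃g G, φ u = v) (hn : 3 ≤ Fintype.card V) :
    ∃ (v : V) (c : G.Walk v v), c.IsCycle := by
  by_contra h
  push_neg at h
  have hac : G.IsAcyclic := fun v c hc => h v c hc
  have htree : G.IsTree := ⟨hconn, hac⟩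
  have hedges := htree.card_edgeFinset
  have hne : Nonempty V := Fintype.card_pos_iff.mp (by omega)
  obtain ⟨v0⟩ := hne
  have hsum := G.sum_degrees_eq_twice_card_edges
  have hs : (∑ v, G.degree v) = Fintype.card V * G.degree v0 := by
    rw [Finset.sum_congr rfl (fun v _ => aux_deg htrans v v0), Finset.sum_const,
      Finset.card_univ, smul_eq_mul]
  rw [hs] at hsum
  rcases le_or_gt (G.degree v0) 1 with hd | hd
  · have h1 : Fintype.card V * G.degree v0 ≤ Fintype.card V * 1 :=
      Nat.mul_le_mul_left _ hd
    omega
  · have h2 : Fintype.card V * 2 ≤ Fintype.card V * G.degree v0 :=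
      Nat.mul_le_mul_left _ hd
    omega

/-- The number of distinct vertices on a cycle equals its length. -/
private lemma aux_card_support {v : V} {c : G.Walk v v} (hc : c.IsCycle) :
    c.support.toFinset.card = c.length := by
  cases c with
  | nil => exact absurd hc (by simp [Walk.isCycle_def])
  | @cons _ w _ h p =>
    have hnd : p.support.Nodup := by
      have := hc.support_nodup
      simpa using this
    have hv : v ∈ p.support := p.end_mem_support
    simp [Walk.support_cons, List.toFinset_cons,
      Finset.insert_eq_self.mpr (List.mem_toFinset.mpr hv),
      List.toFinset_card_of_nodup hnd, Walk.length_support]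

/-- Any cycle has length at most the number of vertices. -/
private lemma aux_len_le {v : V} {c : G.Walk v v} (hc : c.IsCycle) :
    c.length ≤ Fintype.card V := by
  have h1 := hc.support_nodup.length_le_card
  have h2 : c.support.length = c.length + 1 := Walk.length_support c
  have h3 : c.support.tail.length = c.support.length - 1 := List.length_tail
  omega

/-- There is a longest cycle. -/
private lemma aux_exists_longest (hconn : G.Connected)
    (htrans : ∀ u v : V, ∃ φ : G ≃g G, φ u = v) (hn : 3 ≤ Fintype.card V) :
    ∃ (v : V) (c : G.Walk v v), IsLongestCycle G c := by
  obtain ⟨v0, c0, hc0⟩ := aux_exists_cycle hconn htrans hn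
  set lens : Finset ℕ :=
    (Finset.range (Fintype.card V + 1)).filter
      (fun l => ∃ (v : V) (c : G.Walk v v), c.IsCycle ∧ c.length = l) with hlens
  have hmem : ∀ (v : V) (c : G.Walk v v), c.IsCycle → c.length ∈ lens := by
    intro v c hc
    simp only [hlens, Finset.mem_filter, Finset.mem_range]
    exact ⟨Nat.lt_succ_of_le (aux_len_le hc), v, c, hc, rfl⟩
  have hne : lens.Nonempty := ⟨c0.length, hmem v0 c0 hc0⟩
  obtain ⟨hmax1, v, c, hc, hlen⟩ :
      lens.max' hne ∈ Finset.range (Fintype.card V + 1) ∧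
      ∃ (v : V) (c : G.Walk v v), c.IsCycle ∧ c.length = lens.max' hne := by
    have := lens.max'_mem hne
    simpa only [hlens, Finset.mem_filter] using this
  refine ⟨v, c, hc, fun u c' hc' => ?_⟩
  rw [hlen]
  exact Finset.le_max' _ _ (hmem u c' hc')

/-- The image of a longest cycle under an automorphism is a longest cycle. -/
private lemma aux_map_longest {v : V} {c : G.Walk v v} (h : IsLongestCycle G c)
    (φ : G ≃g G) : IsLongestCycle G (c.map φ.toHom) := by
  refine ⟨h.1.map ?_, fun u c' hc' => ?_⟩
  · intro a b hab
    exact φ.toEquiv.injective hab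
  · rw [Walk.length_map]
    exact h.2 u c' hc'

end Aux

theorem cycle_transversal_lower_bound
    (V : Type) [Fintype V] (G : SimpleGraph V)
    (hconn : G.Connected) (htrans : ∀ u v : V, ∃ φ : G ≃g G, φ u = v)
    (hn : 3 ≤ Fintype.card V)
    (S : Finset V)
    -- `S` intersects the vertex set of every longest cycle of `G`:
    (hS : ∀ (v : V) (c : G.Walk v v), IsLongestCycle G c → ∃ s ∈ S, s ∈ c.support) :
    ∃ (v : V) (c : G.Walk v v), c.IsCycle ∧
      Fintype.card V ≤ S.card * c.length ∧
      (Fintype.card V : ℝ) / (S.card : ℝ) ≤ (c.length : ℝ) := by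
  classical
  obtain ⟨v, c, hlc⟩ := aux_exists_longest hconn htrans hn
  obtain ⟨hc, hmax⟩ := hlc
  refine ⟨v, c, hc, ?_⟩
  -- the automorphism group, as a finset of permutations
  set A : Finset (Equiv.Perm V) :=
    Finset.univ.filter (fun e => ∀ a b : V, G.Adj (e a) (e b) ↔ G.Adj a b) with hA
  have hmemA : ∀ e : Equiv.Perm V, e ∈ A ↔ ∀ a b : V, G.Adj (e a) (e b) ↔ G.Adj a b := by
    intro e; simp [hA]
  have hisoA : ∀ φ : G ≃g G, (φ : V ≃ V) ∈ A := by
    intro φ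
    rw [hmemA]
    intro a b
    exact φ.map_rel_iff
  -- composing a member of A with two automorphisms stays in A
  have hcomp : ∀ e ∈ A, ∀ (α β : G ≃g G), ((β : V ≃ V) * e * (α : V ≃ V)) ∈ A := by
    intro e he α β
    rw [hmemA] at he ⊢
    intro a b
    simp only [Equiv.Perm.mul_apply]
    rw [show ((β : V ≃ V) : V → V) = ⇑β from rfl, show ((α : V ≃ V) : V → V) = ⇑α from rfl,
      β.map_rel_iff, he (α a) (α b), α.map_rel_iff]
  -- all fibers {e ∈ A | e w = s} have equal size
  have hfiber : ∀ w s w' s' : V,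
      (A.filter (fun e => e w = s)).card = (A.filter (fun e => e w' = s')).card := by
    intro w s w' s'
    obtain ⟨χ, hχ⟩ := htrans w' w
    obtain ⟨ψ, hψ⟩ := htrans s s'
    refine Finset.card_bij'
      (fun e _ => (ψ : V ≃ V) * e * (χ : V ≃ V))
      (fun e _ => (ψ.symm : V ≃ V) * e * (χ.symm : V ≃ V)) ?_ ?_ ?_ ?_
    · intro e he
      simp only [Finset.mem_filter] at he ⊢
      obtain ⟨heA, hew⟩ := he
      refine ⟨hcomp e heA χ ψ, ?_⟩
      simp only [Equiv.Perm.mul_apply]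
      rw [show ((χ : V ≃ V) : V → V) w' = χ w' from rfl, hχ, hew,
        show ((ψ : V ≃ V) : V → V) s = ψ s from rfl, hψ]
    · intro e he
      simp only [Finset.mem_filter] at he ⊢
      obtain ⟨heA, hew⟩ := he
      refine ⟨hcomp e heA χ.symm ψ.symm, ?_⟩
      simp only [Equiv.Perm.mul_apply]
      rw [show ((χ.symm : V ≃ V) : V → V) w = χ.symm w from rfl,
        show χ.symm w = w' from (by rw [← hχ]; exact χ.symm_apply_apply w'), hew,
        show ((ψ.symm : V ≃ V) : V → V) s' = ψ.symm s' from rfl,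
        ← hψ, ψ.symm_apply_apply]
    · intro e he
      ext x
      simp [Equiv.Perm.mul_apply]
    · intro e he
      ext x
      simp [Equiv.Perm.mul_apply]
  set W : Finset V := c.support.toFinset with hWdef
  have hW : W.card = c.length := aux_card_support hc
  set t := (A.filter (fun e => e v = v)).card with ht
  have ht1 : 1 ≤ t := by
    rw [ht]
    refine Finset.card_pos.mpr ⟨1, Finset.mem_filter.mpr ⟨?_, by simp⟩⟩
    rw [hmemA]
    simp
  have hAcard : A.card = Fintype.card V * t := by
    rw [Finset.card_eq_sum_card_fiberwise (f := fun e => e v) (t := Finset.univ)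
      (fun e _ => Finset.mem_univ _)]
    rw [Finset.sum_congr rfl (fun s _ => hfiber v s v v), Finset.sum_const,
      Finset.card_univ, smul_eq_mul]
  -- each automorphic image of `c` is a longest cycle, hence meets `S`
  have hlow : ∀ e ∈ A, 1 ≤ (S.filter (fun s => s ∈ W.image ⇑e)).card := by
    intro e he
    have heA := (hmemA e).mp he
    obtain ⟨s, hsS, hsup⟩ := hS _ (c.map (mkIso G e heA).toHom)
      (aux_map_longest ⟨hc, hmax⟩ (mkIso G e heA))
    rw [Walk.support_map] at hsup
    obtain ⟨w, hw, hew⟩ := List.mem_map.mp hsup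
    refine Finset.card_pos.mpr ⟨s, Finset.mem_filter.mpr ⟨hsS, ?_⟩⟩
    exact Finset.mem_image.mpr ⟨w, List.mem_toFinset.mpr hw, hew⟩
  have hcount : A.card ≤ S.card * (c.length * t) := by
    calc A.card = ∑ _e ∈ A, 1 := by simp
      _ ≤ ∑ e ∈ A, (S.filter (fun s => s ∈ W.image ⇑e)).card := Finset.sum_le_sum hlow
      _ = ∑ e ∈ A, ∑ s ∈ S, (W.filter (fun w => e w = s)).card := by
          refine Finset.sum_congr rfl (fun e _ => ?_)
          rw [Finset.card_filter]
          refine Finset.sum_congr rfl (fun s _ => ?_)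
          by_cases h : s ∈ W.image ⇑e
          · obtain ⟨w, hw, rfl⟩ := Finset.mem_image.mp h
            rw [if_pos h, eq_comm, Finset.card_eq_one]
            refine ⟨w, ?_⟩
            ext x
            simp only [Finset.mem_filter, Finset.mem_singleton]
            constructor
            · rintro ⟨_, hxe⟩; exact e.injective hxe
            · rintro rfl; exact ⟨hw, rfl⟩
          · rw [if_neg h, eq_comm, Finset.card_eq_zero, Finset.filter_eq_empty_iff]
            exact fun {w} hw hew => h (Finset.mem_image.mpr ⟨w, hw, hew⟩)
      _ = ∑ s ∈ S, ∑ w ∈ W, (A.filter (fun e => e w = s)).card := by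
          simp_rw [Finset.card_filter]
          rw [Finset.sum_comm]
          exact Finset.sum_congr rfl fun s _ => Finset.sum_comm
      _ = ∑ _s ∈ S, ∑ _w ∈ W, t := by
          exact Finset.sum_congr rfl fun s _ =>
            Finset.sum_congr rfl fun w _ => hfiber w s v v
      _ = S.card * (W.card * t) := by
          simp [Finset.sum_const, smul_eq_mul]
      _ = S.card * (c.length * t) := by rw [hW]
  have hmain : Fintype.card V ≤ S.card * c.length := by
    have h1 : Fintype.card V * t ≤ S.card * c.length * t := by
      rw [← hAcard]
      calc A.card ≤ S.card * (c.length * t) := hcount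
        _ = S.card * c.length * t := by ring
    exact Nat.le_of_mul_le_mul_right h1 ht1
  obtain ⟨s0, hs0, _⟩ := hS v c ⟨hc, hmax⟩
  have hSpos : 0 < S.card := Finset.card_pos.mpr ⟨s0, hs0⟩
  refine ⟨hmain, ?_⟩
  rw [div_le_iff₀ (by exact_mod_cast hSpos)]
  calc (Fintype.card V : ℝ) ≤ (S.card * c.length : ℕ) := by exact_mod_cast hmain
    _ = (c.length : ℝ) * (S.card : ℝ) := by push_cast; ring
end
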